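/- Global asymptotic stability of the HIV disease-free equilibrium (Theorem 4.2): let (S, H, H^T) : [0,∞) → ℝ³ be a continuously differentiable solution of the HIV submodel with N(t) = S(t)+H(t)+H^T(t), nonnegative initial conditions with N(0) > 0, and N(0) ≤ Λ/d. If λσ < r2+d+dH (that is, the HIV reproduction number evaluated at the disease-free population N = Λ/d is less than 1), then (S(t), H(t), H^T(t)) converges to (Λ/d, 0, 0) as t → ∞. -/

import Mathlib

open Real Filter Set

lemma expAt (a t : ℝ) : HasDerivAt (fun s => Real.exp (a * s)) (a * Real.exp (a * t)) t := by
  exact ((hasDerivAt_id' t).const_mul a).exp.congr_deriv (by ring)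

lemma tendsto_exp_neg_mul (a : ℝ) (ha : 0 < a) :
    Tendsto (fun t : ℝ => Real.exp (-(a * t))) atTop (nhds 0) := by
  have h1 : Tendsto (fun t : ℝ => a * t) atTop atTop :=
    Tendsto.const_mul_atTop ha tendsto_id
  exact Real.tendsto_exp_neg_atTop_nhds_zero.comp h1

lemma monoIci (f f' : ℝ → ℝ)
    (hf : ∀ t ≥ (0:ℝ), HasDerivAt f (f' t) t)
    (h : ∀ t ≥ (0:ℝ), 0 ≤ f' t) :
    MonotoneOn f (Ici 0) := by
  apply monotoneOn_of_deriv_nonneg (convex_Ici 0)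
  · exact fun t ht => (hf t ht).continuousAt.continuousWithinAt
  · rw [interior_Ici]
    exact fun t ht => ((hf t (le_of_lt ht)).differentiableAt).differentiableWithinAt
  · rw [interior_Ici]
    intro t ht
    rw [(hf t ht.le).deriv]
    exact h t ht.le

lemma antiIci (f f' : ℝ → ℝ)
    (hf : ∀ t ≥ (0:ℝ), HasDerivAt f (f' t) t)
    (h : ∀ t ≥ (0:ℝ), f' t ≤ 0) :
    AntitoneOn f (Ici 0) := by
  apply antitoneOn_of_deriv_nonpos (convex_Ici 0)
  · exact fun t ht => (hf t ht).continuousAt.continuousWithinAt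
  · rw [interior_Ici]
    exact fun t ht => ((hf t (le_of_lt ht)).differentiableAt).differentiableWithinAt
  · rw [interior_Ici]
    intro t ht
    rw [(hf t ht.le).deriv]
    exact h t ht.le

lemma barrier (f f' : ℝ → ℝ) (c : ℝ)
    (hf : ∀ t ≥ (0:ℝ), HasDerivAt f (f' t) t)
    (h0 : c ≤ f 0)
    (hbar : ∀ t ≥ (0:ℝ), f t = c → 0 < f' t) :
    ∀ t ≥ (0:ℝ), c ≤ f t := by
  by_contra hcon
  push_neg at hcon
  obtain ⟨t1, ht1, hft1⟩ := hcon
  have hcontf : ∀ t ≥ (0:ℝ), ContinuousAt f t := fun t ht => (hf t ht).continuousAt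
  set A := Icc (0:ℝ) t1 ∩ f ⁻¹' (Ici c) with hA
  have hAne : (0:ℝ) ∈ A := ⟨⟨le_refl 0, ht1⟩, h0⟩
  have hAbdd : BddAbove A := ⟨t1, fun x hx => hx.1.2⟩
  have hAcl : IsClosed A := by
    apply ContinuousOn.preimage_isClosed_of_isClosed _ isClosed_Icc isClosed_Ici
    exact fun x hx => (hcontf x hx.1).continuousWithinAt
  set t0 := sSup A with ht0def
  have ht0A : t0 ∈ A := hAcl.csSup_mem ⟨0, hAne⟩ hAbdd
  have ht0nn : 0 ≤ t0 := ht0A.1.1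
  have ht0lt : t0 < t1 := lt_of_le_of_ne ht0A.1.2 (by
    intro h
    rw [h] at ht0A
    exact absurd ht0A.2 (not_le.mpr hft1))
  have hlt : ∀ t ∈ Ioc t0 t1, f t < c := by
    intro t ht
    by_contra hge
    push_neg at hge
    have : t ∈ A := ⟨⟨le_trans ht0nn ht.1.le, ht.2⟩, hge⟩
    exact absurd (le_csSup hAbdd this) (not_le.mpr ht.1)
  -- f t0 = c
  have hle : f t0 ≤ c := by
    have htends : Tendsto f (nhdsWithin t0 (Ioi t0)) (nhds (f t0)) :=
      (hcontf t0 ht0nn).continuousWithinAt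
    refine le_of_tendsto htends ?_
    filter_upwards [Ioo_mem_nhdsGT_of_mem (⟨le_refl t0, ht0lt⟩ : t0 ∈ Ico t0 t1)] with t ht
    exact (hlt t ⟨ht.1, ht.2.le⟩).le
  have heq : f t0 = c := le_antisymm hle ht0A.2
  have hpos : 0 < f' t0 := hbar t0 ht0nn heq
  have hslope : Tendsto (slope f t0) (nhdsWithin t0 {t0}ᶜ) (nhds (f' t0)) :=
    hasDerivAt_iff_tendsto_slope.mp (hf t0 ht0nn)
  have hslope' : Tendsto (slope f t0) (nhdsWithin t0 (Ioi t0)) (nhds (f' t0)) :=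
    hslope.mono_left (nhdsWithin_mono t0 (fun x hx => ne_of_gt hx))
  have hev : ∀ᶠ t in nhdsWithin t0 (Ioi t0), 0 < slope f t0 t :=
    hslope'.eventually (eventually_gt_nhds hpos)
  have hev2 : ∀ᶠ t in nhdsWithin t0 (Ioi t0), t ∈ Ioo t0 t1 :=
    eventually_of_mem (Ioo_mem_nhdsGT_of_mem (⟨le_refl t0, ht0lt⟩ : t0 ∈ Ico t0 t1))
      (fun x hx => hx)
  obtain ⟨t, hst, htIoo⟩ := (hev.and hev2).exists
  have hslopepos : 0 < (f t - f t0) / (t - t0) := by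
    simpa [slope_def_field, div_eq_iff] using hst
  have : 0 < f t - f t0 := by
    have hden : 0 < t - t0 := sub_pos.mpr htIoo.1
    have h' := mul_pos hslopepos hden
    rwa [div_mul_cancel₀ _ (ne_of_gt hden)] at h' 
  have hftc : f t < c := hlt t ⟨htIoo.1, htIoo.2.le⟩
  rw [heq] at this
  linarith

set_option maxHeartbeats 1000000 in
/-- Global asymptotic stability of the HIV disease-free equilibrium (Theorem 4.2):
a nonnegative solution of the HIV submodel with total population `N(t) = S+H+H^T`,
`0 < N 0 ≤ Lam/d`, converges to `(Lam/d, 0, 0)` provided `ls < r2+d+dH`, i.e. the HIV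
reproduction number at the disease-free population is less than one. -/
theorem HIV_DFE_global_stability (Lam d dH r2 ls : ℝ)
    (hLam : 0 < Lam) (hd : 0 < d) (hdH : 0 < dH) (hr2 : 0 < r2) (hls : 0 < ls)
    (S H HT N : ℝ → ℝ)
    (hN : ∀ t, N t = S t + H t + HT t)
    (hS : ∀ t ≥ (0 : ℝ), HasDerivAt S (Lam - d * S t - ls * S t * H t / N t) t)
    (hH : ∀ t ≥ (0 : ℝ), HasDerivAt H (ls * S t * H t / N t - (r2 + d + dH) * H t) t)
    (hHT : ∀ t ≥ (0 : ℝ), HasDerivAt HT (r2 * H t - (d + dH) * HT t) t)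
    (h0 : 0 ≤ S 0 ∧ 0 ≤ H 0 ∧ 0 ≤ HT 0)
    (hN0 : 0 < N 0) (hN0le : N 0 ≤ Lam / d)
    (hR : ls < r2 + d + dH) :
    Filter.Tendsto S Filter.atTop (nhds (Lam / d)) ∧
    Filter.Tendsto H Filter.atTop (nhds 0) ∧
    Filter.Tendsto HT Filter.atTop (nhds 0) := by
  obtain ⟨hS0, hH0, hHT0⟩ := h0
  have hm : (0:ℝ) < d + dH := by linarith
  -- derivative of N
  have hNd : ∀ t ≥ (0:ℝ), HasDerivAt N (Lam - (d+dH) * N t + dH * S t) t := by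
    intro t ht
    have h1 := ((hS t ht).add (hH t ht)).add (hHT t ht)
    have h2 : HasDerivAt (fun u => S u + H u + HT u) (Lam - (d+dH) * N t + dH * S t) t := by
      refine h1.congr_deriv ?_
      rw [hN t]; ring
    exact h2.congr_of_eventuallyEq (Filter.Eventually.of_forall hN)
  -- S nonneg
  have hSnn : ∀ t ≥ (0:ℝ), 0 ≤ S t := by
    apply barrier S (fun t => Lam - d * S t - ls * S t * H t / N t) 0 hS hS0
    intro t ht hSt
    rw [hSt]
    simpa using hLam
  -- N lower bound ν
  set ν := min (N 0) (Lam/(d+dH)) / 2 with hνdef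
  have hminpos : 0 < min (N 0) (Lam/(d+dH)) := lt_min hN0 (div_pos hLam hm)
  have hν0 : 0 < ν := half_pos hminpos
  have hνN0 : ν ≤ N 0 := by
    have := min_le_left (N 0) (Lam/(d+dH)); rw [hνdef]; linarith
  have hνLam : (d+dH) * ν < Lam := by
    have h2 : min (N 0) (Lam/(d+dH)) ≤ Lam/(d+dH) := min_le_right _ _
    have h3 := (le_div_iff₀ hm).mp h2
    rw [hνdef]; nlinarith
  have hNν : ∀ t ≥ (0:ℝ), ν ≤ N t := by
    apply barrier N (fun t => Lam - (d+dH) * N t + dH * S t) ν hNd hνN0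
    intro t ht hNt
    rw [hNt]
    nlinarith [hSnn t ht, mul_nonneg hdH.le (hSnn t ht)]
  have hNpos : ∀ t ≥ (0:ℝ), 0 < N t := fun t ht => lt_of_lt_of_le hν0 (hNν t ht)
  -- H nonneg via integrating factor
  have hScont : ∀ t ≥ (0:ℝ), ContinuousAt S t := fun t ht => (hS t ht).continuousAt
  have hNcont : ∀ t ≥ (0:ℝ), ContinuousAt N t := fun t ht => (hNd t ht).continuousAt
  have hmaxc : Continuous fun s : ℝ => max s 0 := continuous_id.max continuous_const
  have hSS : Continuous fun s : ℝ => S (max s 0) := by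
    rw [continuous_iff_continuousAt]
    intro s
    exact ContinuousAt.comp (g := S) (f := fun u : ℝ => max u 0)
      (hScont (max s 0) (le_max_right s 0)) hmaxc.continuousAt
  have hNN : Continuous fun s : ℝ => N (max s 0) := by
    rw [continuous_iff_continuousAt]
    intro s
    exact ContinuousAt.comp (g := N) (f := fun u : ℝ => max u 0)
      (hNcont (max s 0) (le_max_right s 0)) hmaxc.continuousAt
  have hNNpos : ∀ s : ℝ, 0 < N (max s 0) := fun s => hNpos _ (le_max_right s 0)
  set c : ℝ → ℝ := fun s => ls * S (max s 0) / N (max s 0) - (r2+d+dH) with hcdef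
  have hccont : Continuous c :=
    ((continuous_const.mul hSS).div hNN (fun s => (hNNpos s).ne')).sub continuous_const
  set I : ℝ → ℝ := fun t => ∫ s in (0:ℝ)..t, c s with hIdef
  have hId : ∀ t : ℝ, HasDerivAt I (c t) t :=
    fun t => (hccont.integral_hasStrictDerivAt 0 t).hasDerivAt
  have hΦd : ∀ t ≥ (0:ℝ), HasDerivAt (fun u => H u * Real.exp (-(I u))) 0 t := by
    intro t ht
    have hexpI : HasDerivAt (fun u => Real.exp (-(I u))) (Real.exp (-(I t)) * (-(c t))) t :=
      ((hId t).neg).exp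
    have h1 := (hH t ht).mul hexpI
    refine h1.congr_deriv ?_
    have hmax : max t 0 = t := max_eq_left ht
    have hct : c t = ls * S t / N t - (r2+d+dH) := by rw [hcdef]; simp [hmax]
    have hdiv : ls * S t * H t / N t = ls * S t / N t * H t := mul_div_right_comm _ _ _
    rw [hct, hdiv]; ring
  have hΦconst : ∀ t ≥ (0:ℝ), H t * Real.exp (-(I t)) = H 0 := by
    intro t ht
    have hmono := monoIci _ (fun _ => (0:ℝ)) hΦd (fun t _ => le_refl 0)
    have hanti := antiIci _ (fun _ => (0:ℝ)) hΦd (fun t _ => le_refl 0)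
    have h1 : H t * Real.exp (-(I t)) = H 0 * Real.exp (-(I 0)) :=
      le_antisymm (hanti (Set.mem_Ici.mpr le_rfl) (Set.mem_Ici.mpr ht) ht)
        (hmono (Set.mem_Ici.mpr le_rfl) (Set.mem_Ici.mpr ht) ht)
    have hI0 : I 0 = 0 := by rw [hIdef]; simp
    rw [h1, hI0]; simp
  have hHnn : ∀ t ≥ (0:ℝ), 0 ≤ H t := by
    intro t ht
    have h1 := hΦconst t ht
    have he : 0 < Real.exp (-(I t)) := Real.exp_pos _
    have h2 : 0 ≤ H t * Real.exp (-(I t)) := h1 ▸ hH0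
    exact (mul_nonneg_iff_of_pos_right he).mp h2
  -- HT nonneg
  have hHTd : ∀ t ≥ (0:ℝ), HasDerivAt (fun u => HT u * Real.exp ((d+dH)*u))
      (r2 * H t * Real.exp ((d+dH)*t)) t := by
    intro t ht
    have h1 := (hHT t ht).mul (expAt (d+dH) t)
    refine h1.congr_deriv ?_; ring
  have hHTnn : ∀ t ≥ (0:ℝ), 0 ≤ HT t := by
    intro t ht
    have hmono := monoIci _ _ hHTd
      (fun t ht => mul_nonneg (mul_nonneg hr2.le (hHnn t ht)) (Real.exp_pos _).le)
    have h1 := hmono (Set.mem_Ici.mpr le_rfl) (Set.mem_Ici.mpr ht) ht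
    simp only [mul_zero, Real.exp_zero, mul_one] at h1
    have he : 0 < Real.exp ((d+dH)*t) := Real.exp_pos _
    exact (mul_nonneg_iff_of_pos_right he).mp (le_trans hHT0 h1)
  have hSleN : ∀ t ≥ (0:ℝ), S t ≤ N t := by
    intro t ht; rw [hN t]; linarith [hHnn t ht, hHTnn t ht]
  -- decay rate
  set ε := min (r2 + d + dH - ls) d / 2 with hεdef
  have hminp : 0 < min (r2 + d + dH - ls) d := lt_min (by linarith) hd
  have hε0 : 0 < ε := half_pos hminp
  have hεk : ε ≤ r2 + d + dH - ls := by
    have := min_le_left (r2 + d + dH - ls) d; rw [hεdef]; linarith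
  have hεd : ε < d := by
    have := min_le_right (r2 + d + dH - ls) d; rw [hεdef]; linarith
  have hεm : ε < d + dH := by linarith
  -- H decay
  have hHdd : ∀ t ≥ (0:ℝ), HasDerivAt (fun u => H u * Real.exp (ε*u))
      ((ls * S t * H t / N t - (r2+d+dH-ε) * H t) * Real.exp (ε*t)) t := by
    intro t ht
    have h1 := (hH t ht).mul (expAt ε t)
    refine h1.congr_deriv ?_; ring
  have hHdecay : ∀ t ≥ (0:ℝ), H t * Real.exp (ε*t) ≤ H 0 := by
    have hanti := antiIci _ _ hHdd ?_
    · intro t ht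
      have h1 := hanti (Set.mem_Ici.mpr le_rfl) (Set.mem_Ici.mpr ht) ht
      simpa using h1
    · intro t ht
      have hdivle : ls * S t * H t / N t ≤ ls * H t := by
        have h1 : S t / N t ≤ 1 := (div_le_one (hNpos t ht)).mpr (hSleN t ht)
        have h2 : ls * S t * H t / N t = ls * H t * (S t / N t) := by ring
        rw [h2]
        exact mul_le_of_le_one_right (mul_nonneg hls.le (hHnn t ht)) h1
      have h3 : ls * S t * H t / N t - (r2+d+dH-ε) * H t ≤ 0 := by
        nlinarith [mul_nonneg (hHnn t ht) (by linarith : (0:ℝ) ≤ r2+d+dH-ε-ls)]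
      nlinarith [Real.exp_pos (ε*t), h3]
  -- HT decay
  set C := r2 * H 0 / (d+dH-ε) with hCdef
  have hC0 : 0 ≤ C := div_nonneg (mul_nonneg hr2.le hH0) (by linarith)
  have hCm : C * (d+dH-ε) = r2 * H 0 := div_mul_cancel₀ _ (by linarith : d+dH-ε ≠ 0)
  have hGd : ∀ t ≥ (0:ℝ), HasDerivAt
      (fun u => HT u * Real.exp ((d+dH)*u) - C * Real.exp ((d+dH-ε)*u))
      (r2 * H t * Real.exp ((d+dH)*t) - r2 * H 0 * Real.exp ((d+dH-ε)*t)) t := by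
    intro t ht
    have h1 := ((hHT t ht).mul (expAt (d+dH) t)).sub ((expAt (d+dH-ε) t).const_mul C)
    refine h1.congr_deriv ?_
    rw [← hCm]; ring
  have hHTdecay : ∀ t ≥ (0:ℝ), HT t * Real.exp (ε*t) ≤ HT 0 + C := by
    have hanti := antiIci _ _ hGd ?_
    · intro t ht
      have h1 := hanti (Set.mem_Ici.mpr le_rfl) (Set.mem_Ici.mpr ht) ht
      simp only [mul_zero, Real.exp_zero, mul_one] at h1
      have hE : Real.exp ((d+dH)*t) = Real.exp (ε*t) * Real.exp ((d+dH-ε)*t) := by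
        rw [← Real.exp_add]; ring_nf
      rw [hE] at h1
      have hX1 : (1:ℝ) ≤ Real.exp ((d+dH-ε)*t) :=
        Real.one_le_exp (mul_nonneg (by linarith) ht)
      have hu : 0 ≤ HT t * Real.exp (ε*t) :=
        mul_nonneg (hHTnn t ht) (Real.exp_pos _).le
      rcases le_total (HT t * Real.exp (ε*t)) C with h | h
      · linarith
      · nlinarith [mul_nonneg (sub_nonneg.mpr h) (sub_nonneg.mpr hX1)]
    · intro t ht
      have hE : Real.exp ((d+dH)*t) = Real.exp (ε*t) * Real.exp ((d+dH-ε)*t) := by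
        rw [← Real.exp_add]; ring_nf
      rw [hE]
      nlinarith [mul_le_mul_of_nonneg_right (hHdecay t ht) (Real.exp_pos ((d+dH-ε)*t)).le,
        hr2.le, Real.exp_pos ((d+dH-ε)*t)]
  -- N upper bound
  have hNupd : ∀ t ≥ (0:ℝ), HasDerivAt (fun u => (N u - Lam/d) * Real.exp (d*u))
      (-(dH*(H t + HT t)) * Real.exp (d*t)) t := by
    intro t ht
    have h1 := ((hNd t ht).sub_const (Lam/d)).mul (expAt d t)
    refine h1.congr_deriv ?_
    rw [hN t]
    field_simp
    ring
  have hNub : ∀ t ≥ (0:ℝ), N t ≤ Lam/d := by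
    have hanti := antiIci _ _ hNupd ?_
    · intro t ht
      have h1 := hanti (Set.mem_Ici.mpr le_rfl) (Set.mem_Ici.mpr ht) ht
      simp only [mul_zero, Real.exp_zero, mul_one] at h1
      have he : 0 < Real.exp (d*t) := Real.exp_pos _
      nlinarith
    · intro t ht
      have h2 : 0 ≤ dH * (H t + HT t) :=
        mul_nonneg hdH.le (add_nonneg (hHnn t ht) (hHTnn t ht))
      nlinarith [Real.exp_pos (d*t)]
  -- N lower bound
  set W := dH * (H 0 + (HT 0 + C)) with hWdef
  have hW0 : 0 ≤ W := mul_nonneg hdH.le (by linarith)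
  set B := W / (d-ε) with hBdef
  have hB0 : 0 ≤ B := div_nonneg hW0 (by linarith)
  have hBm : B * (d-ε) = W := div_mul_cancel₀ _ (by linarith : d-ε ≠ 0)
  have hLd : ∀ t ≥ (0:ℝ), HasDerivAt
      (fun u => (N u - Lam/d) * Real.exp (d*u) + B * Real.exp ((d-ε)*u))
      (-(dH*(H t + HT t)) * Real.exp (d*t) + W * Real.exp ((d-ε)*t)) t := by
    intro t ht
    have h1 := (hNupd t ht).add ((expAt (d-ε) t).const_mul B)
    refine h1.congr_deriv ?_
    rw [← hBm]; ring
  have hNlb : ∀ t ≥ (0:ℝ),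
      Lam/d + ((N 0 - Lam/d) + B) * Real.exp (-(d*t)) - B * Real.exp (-(ε*t)) ≤ N t := by
    have hmono := monoIci _ _ hLd ?_
    · intro t ht
      have h1 := hmono (Set.mem_Ici.mpr le_rfl) (Set.mem_Ici.mpr ht) ht
      simp only [mul_zero, Real.exp_zero, mul_one] at h1
      have hmul := mul_le_mul_of_nonneg_right h1 (Real.exp_pos (-(d*t))).le
      have hE1 : Real.exp (d*t) * Real.exp (-(d*t)) = 1 := by
        rw [← Real.exp_add]; simp
      have hE2 : Real.exp ((d-ε)*t) * Real.exp (-(d*t)) = Real.exp (-(ε*t)) := by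
        rw [← Real.exp_add]; ring_nf
      have h4 : ((N t - Lam/d) * Real.exp (d*t) + B * Real.exp ((d-ε)*t)) * Real.exp (-(d*t))
          = (N t - Lam/d) + B * Real.exp (-(ε*t)) := by
        rw [add_mul, mul_assoc, mul_assoc, hE1, hE2, mul_one]
      rw [h4] at hmul
      linarith
    · intro t ht
      have hE : Real.exp (d*t) = Real.exp (ε*t) * Real.exp ((d-ε)*t) := by
        rw [← Real.exp_add]; ring_nf
      rw [hE, hWdef]
      have h2 : (H t + HT t) * Real.exp (ε*t) ≤ H 0 + (HT 0 + C) := by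
        nlinarith [hHdecay t ht, hHTdecay t ht]
      nlinarith [mul_le_mul_of_nonneg_right (mul_le_mul_of_nonneg_left h2 hdH.le)
        (Real.exp_pos ((d-ε)*t)).le]
  -- limits
  have hHub' : ∀ t ≥ (0:ℝ), H t ≤ H 0 * Real.exp (-(ε*t)) := by
    intro t ht
    have hE : Real.exp (ε*t) * Real.exp (-(ε*t)) = 1 := by rw [← Real.exp_add]; simp
    have := mul_le_mul_of_nonneg_right (hHdecay t ht) (Real.exp_pos (-(ε*t))).le
    rwa [mul_assoc, hE, mul_one] at this
  have hHTub' : ∀ t ≥ (0:ℝ), HT t ≤ (HT 0 + C) * Real.exp (-(ε*t)) := by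
    intro t ht
    have hE : Real.exp (ε*t) * Real.exp (-(ε*t)) = 1 := by rw [← Real.exp_add]; simp
    have := mul_le_mul_of_nonneg_right (hHTdecay t ht) (Real.exp_pos (-(ε*t))).le
    rwa [mul_assoc, hE, mul_one] at this
  have hHtend : Filter.Tendsto H Filter.atTop (nhds 0) := by
    apply tendsto_of_tendsto_of_tendsto_of_le_of_le'
      (tendsto_const_nhds : Filter.Tendsto (fun _ : ℝ => (0:ℝ)) Filter.atTop (nhds 0))
      (by simpa using (tendsto_exp_neg_mul ε hε0).const_mul (H 0))
    · exact Filter.eventually_atTop.mpr ⟨0, fun t ht => hHnn t ht⟩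
    · exact Filter.eventually_atTop.mpr ⟨0, fun t ht => hHub' t ht⟩
  have hHTtend : Filter.Tendsto HT Filter.atTop (nhds 0) := by
    apply tendsto_of_tendsto_of_tendsto_of_le_of_le'
      (tendsto_const_nhds : Filter.Tendsto (fun _ : ℝ => (0:ℝ)) Filter.atTop (nhds 0))
      (by simpa using (tendsto_exp_neg_mul ε hε0).const_mul (HT 0 + C))
    · exact Filter.eventually_atTop.mpr ⟨0, fun t ht => hHTnn t ht⟩
    · exact Filter.eventually_atTop.mpr ⟨0, fun t ht => hHTub' t ht⟩
  have hNtend : Filter.Tendsto N Filter.atTop (nhds (Lam/d)) := by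
    apply tendsto_of_tendsto_of_tendsto_of_le_of_le'
      (g := fun t => Lam/d + ((N 0 - Lam/d) + B) * Real.exp (-(d*t)) - B * Real.exp (-(ε*t)))
      (h := fun _ : ℝ => Lam/d)
    · have h1 := ((tendsto_exp_neg_mul d hd).const_mul ((N 0 - Lam/d) + B))
      have h2 := ((tendsto_exp_neg_mul ε hε0).const_mul B)
      have := (tendsto_const_nhds (x := Lam/d) (f := Filter.atTop (α := ℝ))).add h1 |>.sub h2
      simpa using this
    · exact tendsto_const_nhds
    · exact Filter.eventually_atTop.mpr ⟨0, fun t ht => hNlb t ht⟩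
    · exact Filter.eventually_atTop.mpr ⟨0, fun t ht => hNub t ht⟩
  have hSfun : S = fun t => N t - H t - HT t := funext (fun t => by
    have := hN t; linarith)
  have hStend : Filter.Tendsto S Filter.atTop (nhds (Lam/d)) := by
    rw [hSfun]
    have := (hNtend.sub hHtend).sub hHTtend
    simpa using this
  exact ⟨hStend, hHtend, hHTtend⟩
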